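/- arXiv:2404.08841 — 2 statements merged into one kernel-verified Lean document; each statement's English description precedes it below -/
import Mathlib

section
/- Let V and W be subvarieties of a variety U of Ω-algebras, with W idempotent. If the intersection V ∩ W is the trivial variety and U is congruence 3-permutable, then the Mal'tsev product V ∘ W is a variety. -/
structure Signature where
  symbols : Type
  arity : symbols → ℕ

structure Alg (S : Signature) where
  carrier : Type
  op : ∀ ω : S.symbols, (Fin (S.arity ω) → carrier) → carrier
  nonempty : Nonempty carrier

inductive Term (S : Signature) (X : Type) : Type
  | var : X → Term S X
  | app : ∀ ω : S.symbols, (Fin (S.arity ω) → Term S X) → Term S X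

def Term.eval {S : Signature} {X : Type} (A : Alg S) (env : X → A.carrier) :
    Term S X → A.carrier
  | .var x => env x
  | .app ω ts => A.op ω fun i => (ts i).eval A env

/-- The algebra `A` satisfies the identity `u = v`. -/
def Alg.sat {S : Signature} (A : Alg S) {X : Type} (u v : Term S X) : Prop :=
  ∀ env : X → A.carrier, u.eval A env = v.eval A env

/-- An identity: a pair of terms in the countably many variables `x₀, x₁, …`. -/
abbrev Ident (S : Signature) := Term S ℕ × Term S ℕ

/-- `A` lies in the variety axiomatized by the set of identities `E`. -/
def Alg.Models {S : Signature} (A : Alg S) (E : Set (Ident S)) : Prop :=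
  ∀ e ∈ E, A.sat e.1 e.2

/-- The identity `u = v` holds in the variety axiomatized by `E`. -/
def Conseq {S : Signature} (E : Set (Ident S)) {X : Type} (u v : Term S X) : Prop :=
  ∀ A : Alg S, A.Models E → A.sat u v

/-- `a` is an idempotent element of `A`. -/
def Alg.IsIdem {S : Signature} (A : Alg S) (a : A.carrier) : Prop :=
  ∀ ω : S.symbols, A.op ω (fun _ => a) = a

/-- `B` is (the universe of) a subalgebra of `A`. -/
def Alg.IsSubuniverse {S : Signature} (A : Alg S) (B : Set A.carrier) : Prop :=
  ∀ ω (a : Fin (S.arity ω) → A.carrier), (∀ i, a i ∈ B) → A.op ω a ∈ B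

/-- The subalgebra of `A` on a nonempty subuniverse `B`. -/
def Alg.subAlg {S : Signature} (A : Alg S) (B : Set A.carrier)
    (h : A.IsSubuniverse B) (hne : B.Nonempty) : Alg S where
  carrier := B
  op ω a := ⟨A.op ω fun i => (a i : A.carrier), h ω _ fun i => (a i).2⟩
  nonempty := hne.to_subtype

/-- A congruence of `A`: an equivalence relation compatible with all operations. -/
structure Congruence {S : Signature} (A : Alg S) where
  rel : A.carrier → A.carrier → Prop
  iseqv : Equivalence rel
  compat : ∀ ω (a b : Fin (S.arity ω) → A.carrier),
    (∀ i, rel (a i) (b i)) → rel (A.op ω a) (A.op ω b)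

def Congruence.setoid {S : Signature} {A : Alg S} (θ : Congruence A) :
    Setoid A.carrier := ⟨θ.rel, θ.iseqv⟩

/-- The quotient algebra `A/θ`. -/
noncomputable def Alg.quot {S : Signature} (A : Alg S) (θ : Congruence A) : Alg S where
  carrier := Quotient θ.setoid
  op ω q := Quotient.mk θ.setoid (A.op ω fun i => (q i).out)
  nonempty := A.nonempty.map (Quotient.mk θ.setoid)

/-- Membership in the Mal'tsev product of the varieties axiomatized by `V` and `W`:
`A` has a congruence `θ` with `A/θ` in (the variety of) `W` such that every
`θ`-class which is a subalgebra of `A` is an algebra in (the variety of) `V`. -/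
def InMaltsev {S : Signature} (V W : Set (Ident S)) (A : Alg S) : Prop :=
  ∃ θ : Congruence A, (A.quot θ).Models W ∧
    ∀ a : A.carrier, ∀ h : A.IsSubuniverse {b | θ.rel a b},
      (A.subAlg {b | θ.rel a b} h ⟨a, θ.iseqv.refl a⟩).Models V

/-- A class of algebras is a variety iff it is axiomatized by some set of identities. -/
def IsVarietyClass {S : Signature} (K : Alg S → Prop) : Prop :=
  ∃ E : Set (Ident S), ∀ A : Alg S, K A ↔ A.Models E

/-- Relational composition: `a (r ∘ s) c` iff `a r b s c` for some `b`. -/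
def RelComp {α : Type} (r s : α → α → Prop) : α → α → Prop :=
  fun a c => ∃ b, r a b ∧ s b c

/-- Two relations `3`-permute if `r ∘ s ∘ r = s ∘ r ∘ s`. -/
def ThreePerm {α : Type} (r s : α → α → Prop) : Prop :=
  RelComp (RelComp r s) r = RelComp (RelComp s r) s

section Aux

variable {S : Signature}

namespace Term

/-- Substitution of terms for variables. -/
def bind : Term S ℕ → (ℕ → Term S ℕ) → Term S ℕ
  | var x, σ => σ x
  | app ω ts, σ => app ω fun i => (ts i).bind σ

theorem eval_bind (A : Alg S) (σ : ℕ → Term S ℕ) (e : ℕ → A.carrier) :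
    ∀ t : Term S ℕ, (t.bind σ).eval A e = t.eval A fun n => (σ n).eval A e
  | var _ => rfl
  | app ω ts => congrArg _ (funext fun i => eval_bind A σ e (ts i))

/-- A bound on the variables occurring in a term. -/
def bound : Term S ℕ → ℕ
  | var x => x + 1
  | app _ ts => Finset.univ.sup fun i => (ts i).bound

theorem eval_congr (A : Alg S) {e e' : ℕ → A.carrier} :
    ∀ t : Term S ℕ, (∀ n < t.bound, e n = e' n) → t.eval A e = t.eval A e'
  | var x, h => h x (Nat.lt_succ_self x)
  | app ω ts, h => congrArg _ (funext fun i => eval_congr A (ts i) fun n hn =>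
      h n (lt_of_lt_of_le hn
        (Finset.le_sup (f := fun j => (ts j).bound) (Finset.mem_univ i))))

end Term

theorem conseq_refl (E : Set (Ident S)) {X : Type} (t : Term S X) : Conseq E t t :=
  fun _ _ _ => rfl

theorem conseq_symm {E : Set (Ident S)} {X : Type} {t s : Term S X}
    (h : Conseq E t s) : Conseq E s t :=
  fun A hA env => (h A hA env).symm

theorem conseq_trans {E : Set (Ident S)} {X : Type} {t s r : Term S X}
    (h1 : Conseq E t s) (h2 : Conseq E s r) : Conseq E t r :=
  fun A hA env => (h1 A hA env).trans (h2 A hA env)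

theorem conseq_of_mem {E : Set (Ident S)} {e : Ident S} (he : e ∈ E) :
    Conseq E e.1 e.2 :=
  fun A hA => hA e he

theorem conseq_mono {E E' : Set (Ident S)}
    (h : ∀ A : Alg S, A.Models E' → A.Models E) {X : Type} {t s : Term S X}
    (hts : Conseq E t s) : Conseq E' t s :=
  fun A hA => hts A (h A hA)

theorem conseq_bind {E : Set (Ident S)} {t s : Term S ℕ} {σ σ' : ℕ → Term S ℕ}
    (hts : Conseq E t s) (hσ : ∀ n, Conseq E (σ n) (σ' n)) :
    Conseq E (t.bind σ) (s.bind σ') := by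
  intro A hA env
  rw [Term.eval_bind, Term.eval_bind]
  have : (fun n => (σ n).eval A env) = fun n => (σ' n).eval A env :=
    funext fun n => hσ n A hA env
  rw [this]
  exact hts A hA _

theorem conseq_app {E : Set (Ident S)} {ω : S.symbols}
    {ts ts' : Fin (S.arity ω) → Term S ℕ} (h : ∀ i, Conseq E (ts i) (ts' i)) :
    Conseq E (Term.app ω ts) (Term.app ω ts') :=
  fun A hA env =>
    show A.op ω _ = A.op ω _ from congrArg _ (funext fun i => h i A hA env)

end Aux
section Aux2

variable {S : Signature}

/-- The absolutely free term algebra on countably many generators. -/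
def TermAlg (S : Signature) : Alg S :=
  ⟨Term S ℕ, Term.app, ⟨Term.var 0⟩⟩

theorem eval_termAlg (σ : ℕ → Term S ℕ) :
    ∀ t : Term S ℕ, t.eval (TermAlg S) σ = t.bind σ
  | .var _ => rfl
  | .app ω ts =>
      show Term.app ω _ = Term.app ω _ from
        congrArg _ (funext fun i => eval_termAlg σ (ts i))

theorem out_rel {A : Alg S} (θ : Congruence A) (a : A.carrier) :
    θ.rel (Quotient.mk θ.setoid a).out a :=
  @Quotient.exact _ θ.setoid _ _ (Quotient.out_eq _)

theorem quot_op (A : Alg S) (θ : Congruence A) {ω : S.symbols}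
    (a : Fin (S.arity ω) → A.carrier) :
    (A.quot θ).op ω (fun i => Quotient.mk θ.setoid (a i)) =
      Quotient.mk θ.setoid (A.op ω a) :=
  Quotient.sound (θ.compat ω _ _ fun i => out_rel θ (a i))

theorem eval_quot (A : Alg S) (θ : Congruence A) (e : ℕ → A.carrier) :
    ∀ t : Term S ℕ,
      t.eval (A.quot θ) (fun n => Quotient.mk θ.setoid (e n)) =
        Quotient.mk θ.setoid (t.eval A e)
  | .var _ => rfl
  | .app ω ts => by
      show (A.quot θ).op ω (fun i => (ts i).eval (A.quot θ) _) = _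
      have : (fun i => (ts i).eval (A.quot θ) (fun n => Quotient.mk θ.setoid (e n)))
          = fun i => Quotient.mk θ.setoid ((ts i).eval A e) :=
        funext fun i => eval_quot A θ e (ts i)
      rw [this, quot_op]
      rfl

theorem subAlg_eval (A : Alg S) {B : Set A.carrier} (h : A.IsSubuniverse B)
    (hne : B.Nonempty) (env : ℕ → (A.subAlg B h hne).carrier) :
    ∀ t : Term S ℕ,
      (t.eval (A.subAlg B h hne) env).1 = t.eval A fun n => (env n).1
  | .var _ => rfl
  | .app ω ts =>
      show A.op ω _ = A.op ω _ from
        congrArg _ (funext fun i => subAlg_eval A h hne env (ts i))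

/-- The congruence of `E`-consequence on the term algebra. -/
def conseqCong (E : Set (Ident S)) : Congruence (TermAlg S) where
  rel t s := Conseq E t s
  iseqv := ⟨fun t => conseq_refl E t, conseq_symm, conseq_trans⟩
  compat _ _ _ h := conseq_app h

/-- Reflexive-transitive closure of a reflexive single-coordinate-compatible
relation is compatible. -/
theorem closure_compat (A : Alg S) (r : A.carrier → A.carrier → Prop)
    (hcomp : ∀ (ω : S.symbols) (f : Fin (S.arity ω) → A.carrier) (j : Fin (S.arity ω))
      (x y : A.carrier), r x y →
      r (A.op ω (Function.update f j x)) (A.op ω (Function.update f j y)))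
    (ω : S.symbols) (a b : Fin (S.arity ω) → A.carrier)
    (h : ∀ i, Relation.ReflTransGen r (a i) (b i)) :
    Relation.ReflTransGen r (A.op ω a) (A.op ω b) := by
  classical
  have key : ∀ s : Finset (Fin (S.arity ω)),
      Relation.ReflTransGen r (A.op ω a) (A.op ω fun i => if i ∈ s then b i else a i) := by
    intro s
    induction s using Finset.induction with
    | empty =>
        simp only [Finset.notMem_empty, if_false]
        exact Relation.ReflTransGen.refl
    | @insert j s hj ih =>
        refine ih.trans ?_
        have h1 : (fun i => if i ∈ insert j s then b i else a i)
            = Function.update (fun i => if i ∈ s then b i else a i) j (b j) := by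
          funext i
          by_cases hij : i = j
          · subst hij; simp [Function.update]
          · simp [Function.update, hij, Finset.mem_insert]
        rw [h1]
        have h0' : Function.update (fun i => if i ∈ s then b i else a i) j (a j)
            = fun i => if i ∈ s then b i else a i := by
          funext i
          by_cases hij : i = j
          · subst hij; simp [Function.update, hj]
          · simp [Function.update, hij]
        have L := Relation.ReflTransGen.lift
          (fun x => A.op ω (Function.update (fun i => if i ∈ s then b i else a i) j x))
          (fun x y hxy => hcomp ω _ j x y hxy) _ _ (h j)
        simp only [Function.onFun] at L
        rwa [h0'] at L
  have := key Finset.univ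
  simpa using this

theorem closure_symm {α : Type} {r : α → α → Prop} (hs : ∀ a b, r a b → r b a)
    {a b : α} (h : Relation.ReflTransGen r a b) : Relation.ReflTransGen r b a :=
  (@Relation.ReflTransGen.symmetric _ _ ⟨fun _ _ hab => hs _ _ hab⟩).symm _ _ h

end Aux2
section Aux3

variable {S : Signature}

/-- A congruence on the free `U`-algebra induced by consequence modulo a
coarser variety. -/
def liftCong (U E' : Set (Ident S))
    (h : ∀ t s : Term S ℕ, Conseq U t s → Conseq E' t s) :
    Congruence ((TermAlg S).quot (conseqCong U)) where
  rel q r := Conseq E' q.out r.out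
  iseqv := ⟨fun _ => conseq_refl E' _, conseq_symm, conseq_trans⟩
  compat ω a b hab := by
    show Conseq E' (Quotient.mk _ (Term.app ω fun i => (a i).out)).out
      (Quotient.mk _ (Term.app ω fun i => (b i).out)).out
    refine conseq_trans (h _ _ (out_rel (conseqCong U) _)) (conseq_trans ?_
      (conseq_symm (h _ _ (out_rel (conseqCong U) _))))
    exact conseq_app hab

theorem FU_models (U : Set (Ident S)) : ((TermAlg S).quot (conseqCong U)).Models U := by
  intro e he env
  have henv : env = fun n => Quotient.mk (conseqCong U).setoid (env n).out :=
    funext fun n => (Quotient.out_eq _).symm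
  rw [henv, eval_quot, eval_quot]
  erw [eval_termAlg, eval_termAlg]
  exact Quotient.sound (conseq_bind (conseq_of_mem he) fun n => conseq_refl U _)


/-- One step of the alternating `V`/`W` chain. -/
def chainStep (V W : Set (Ident S)) : Term S ℕ → Term S ℕ → Prop :=
  fun t s => Conseq V t s ∨ Conseq W t s

/-- The congruence generated by `V`- and `W`-consequence together. -/
def chainCong (V W : Set (Ident S)) : Congruence (TermAlg S) where
  rel := Relation.ReflTransGen (chainStep V W)
  iseqv := ⟨fun _ => Relation.ReflTransGen.refl,
    fun h => closure_symm (fun _ _ h' => h'.imp conseq_symm conseq_symm) h,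
    fun h1 h2 => h1.trans h2⟩
  compat := by
    refine closure_compat (TermAlg S) (chainStep V W) ?_
    intro ω f j x y hxy
    rcases hxy with h | h
    · exact Or.inl (conseq_app fun i => by
        by_cases hij : i = j
        · subst hij; simp only [Function.update_self]; exact h
        · simp only [Function.update_of_ne hij]; exact conseq_refl _ _)
    · exact Or.inr (conseq_app fun i => by
        by_cases hij : i = j
        · subst hij; simp only [Function.update_self]; exact h
        · simp only [Function.update_of_ne hij]; exact conseq_refl _ _)

/-- Existence of switch terms `u, v` with `V ⊨ x ≈ u`, `W ⊨ u ≈ v`,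
`V ⊨ v ≈ y`. -/
theorem switch_exists (U V W : Set (Ident S))
    (hVU : ∀ A : Alg S, A.Models V → A.Models U)
    (hWU : ∀ A : Alg S, A.Models W → A.Models U)
    (htriv : ∀ A : Alg S, A.Models V → A.Models W → Subsingleton A.carrier)
    (h3perm : ∀ A : Alg S, A.Models U → ∀ α β : Congruence A, ThreePerm α.rel β.rel) :
    ∃ u v : Term S ℕ, Conseq V (Term.var 0) u ∧ Conseq W u v ∧
      Conseq V v (Term.var 1) := by
  classical
  have hUV : ∀ t s : Term S ℕ, Conseq U t s → Conseq V t s :=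
    fun t s h => conseq_mono hVU h
  have hUW : ∀ t s : Term S ℕ, Conseq U t s → Conseq W t s :=
    fun t s h => conseq_mono hWU h
  have trivV : ((TermAlg S).quot (chainCong V W)).Models V := by
    intro e he env
    have henv : env = fun n => Quotient.mk (chainCong V W).setoid (env n).out :=
      funext fun n => (Quotient.out_eq _).symm
    rw [henv, eval_quot, eval_quot]
    erw [eval_termAlg, eval_termAlg]
    exact Quotient.sound (Relation.ReflTransGen.single
      (Or.inl (conseq_bind (conseq_of_mem he) fun n => conseq_refl V _)))
  have trivW : ((TermAlg S).quot (chainCong V W)).Models W := by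
    intro e he env
    have henv : env = fun n => Quotient.mk (chainCong V W).setoid (env n).out :=
      funext fun n => (Quotient.out_eq _).symm
    rw [henv, eval_quot, eval_quot]
    erw [eval_termAlg, eval_termAlg]
    exact Quotient.sound (Relation.ReflTransGen.single
      (Or.inr (conseq_bind (conseq_of_mem he) fun n => conseq_refl W _)))
  have hsub := htriv _ trivV trivW
  have hchain : Relation.ReflTransGen (chainStep V W) (Term.var 0) (Term.var 1) := by
    have : Quotient.mk (chainCong V W).setoid (Term.var 0)
        = Quotient.mk (chainCong V W).setoid (Term.var 1) := hsub.elim _ _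
    exact @Quotient.exact _ (chainCong V W).setoid _ _ this
  -- Step 2: push the chain into the free `U`-algebra.
  set FU := (TermAlg S).quot (conseqCong U) with hFU
  set α := liftCong U V hUV with hα
  set β := liftCong U W hUW with hβ
  have hdesc : Relation.ReflTransGen (fun q r => α.rel q r ∨ β.rel q r)
      (Quotient.mk (conseqCong U).setoid (Term.var 0))
      (Quotient.mk (conseqCong U).setoid (Term.var 1)) := by
    refine Relation.ReflTransGen.lift (Quotient.mk (conseqCong U).setoid) ?_ _ _ hchain
    intro t s hts
    have hot : Conseq V (Quotient.mk (conseqCong U).setoid t).out t :=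
      hUV _ _ (out_rel (conseqCong U) t)
    have hos : Conseq V s (Quotient.mk (conseqCong U).setoid s).out :=
      conseq_symm (hUV _ _ (out_rel (conseqCong U) s))
    have hot' : Conseq W (Quotient.mk (conseqCong U).setoid t).out t :=
      hUW _ _ (out_rel (conseqCong U) t)
    have hos' : Conseq W s (Quotient.mk (conseqCong U).setoid s).out :=
      conseq_symm (hUW _ _ (out_rel (conseqCong U) s))
    rcases hts with h | h
    · exact Or.inl (conseq_trans hot (conseq_trans h hos))
    · exact Or.inr (conseq_trans hot' (conseq_trans h hos'))
  -- Step 3: collapse the chain using `3`-permutability.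
  have h3 := h3perm FU (FU_models U) α β
  set R : FU.carrier → FU.carrier → Prop := RelComp (RelComp α.rel β.rel) α.rel with hR
  have hcollapse : ∀ q r : FU.carrier,
      Relation.ReflTransGen (fun q r => α.rel q r ∨ β.rel q r) q r → R q r := by
    intro q r hqr
    induction hqr with
    | refl => exact ⟨q, ⟨q, α.iseqv.refl q, β.iseqv.refl q⟩, α.iseqv.refl q⟩
    | tail hab hstep ih =>
        rcases hstep with hstep | hstep
        · obtain ⟨m2, hm2, hαm⟩ := ih
          exact ⟨_, hm2, α.iseqv.trans hαm hstep⟩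
        · -- R then a β-step
          obtain ⟨m2, ⟨m1, hα1, hβ1⟩, hα2⟩ := ih
          -- m2 (α∘β) c hence m2 ((α∘β)∘α) c hence m2 ((β∘α)∘β) c
          have hm2c : RelComp (RelComp α.rel β.rel) α.rel m2 _ :=
            ⟨_, ⟨_, hα2, hstep⟩, α.iseqv.refl _⟩
          have hm2c' := (congrFun (congrFun h3 m2) _).mp hm2c
          obtain ⟨n2, ⟨n1, hβn1, hαn⟩, hβn2⟩ := hm2c'
          -- q α m1 β n1, n1 α n2: q ((α∘β)∘α) n2 = ((β∘α)∘β) n2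
          have hq : RelComp (RelComp α.rel β.rel) α.rel q n2 :=
            ⟨n1, ⟨m1, hα1, β.iseqv.trans hβ1 hβn1⟩, hαn⟩
          have hq' := (congrFun (congrFun h3 q) n2).mp hq
          obtain ⟨k2, ⟨k1, hβk1, hαk⟩, hβk2⟩ := hq'
          -- q β k1 α k2 β c
          have : RelComp (RelComp β.rel α.rel) β.rel q _ :=
            ⟨k2, ⟨k1, hβk1, hαk⟩, β.iseqv.trans hβk2 hβn2⟩
          exact (congrFun (congrFun h3 q) _).mpr this
  obtain ⟨m2, ⟨m1, hα1, hβ1⟩, hα2⟩ :=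
    hcollapse _ _ hdesc
  refine ⟨m1.out, m2.out, ?_, hβ1, ?_⟩
  · exact conseq_trans (conseq_symm (hUV _ _ (out_rel (conseqCong U) _))) hα1
  · exact conseq_trans hα2 (hUV _ _ (out_rel (conseqCong U) _))

end Aux3
section Aux4

variable {S : Signature}

/-- The one-step `W`-coherence relation on an algebra. -/
def gammaRel (W : Set (Ident S)) (A : Alg S) (a b : A.carrier) : Prop :=
  ∃ (p q : Term S ℕ) (e : ℕ → A.carrier),
    Conseq W p q ∧ p.eval A e = a ∧ q.eval A e = b

theorem gamma_refl (W : Set (Ident S)) (A : Alg S) (a : A.carrier) :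
    gammaRel W A a a :=
  ⟨Term.var 0, Term.var 0, fun _ => a, conseq_refl W _, rfl, rfl⟩

theorem gamma_symm {W : Set (Ident S)} {A : Alg S} {a b : A.carrier}
    (h : gammaRel W A a b) : gammaRel W A b a := by
  obtain ⟨p, q, e, hpq, hp, hq⟩ := h
  exact ⟨q, p, e, conseq_symm hpq, hq, hp⟩

theorem gamma_compat (W : Set (Ident S)) (A : Alg S)
    (h0 : ∀ ω : S.symbols, 0 < S.arity ω) (ω : S.symbols)
    (a b : Fin (S.arity ω) → A.carrier) (h : ∀ i, gammaRel W A (a i) (b i)) :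
    gammaRel W A (A.op ω a) (A.op ω b) := by
  classical
  set k := S.arity ω with hk
  have hkpos : 0 < k := h0 ω
  choose p q e hpq hp hq using h
  set ren : Fin k → ℕ → ℕ := fun i m => i.val + m * k with hren
  set E : ℕ → A.carrier := fun m => e ⟨m % k, Nat.mod_lt m hkpos⟩ (m / k) with hE
  have hcomp : ∀ (i : Fin k) (m : ℕ), E (ren i m) = e i m := by
    intro i m
    have h1 : (i.val + m * k) % k = i.val := by
      rw [Nat.add_mul_mod_self_right, Nat.mod_eq_of_lt i.isLt]
    have h2 : (i.val + m * k) / k = m := by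
      rw [Nat.add_mul_div_right _ _ hkpos, Nat.div_eq_of_lt i.isLt, Nat.zero_add]
    show e ⟨(i.val + m * k) % k, _⟩ ((i.val + m * k) / k) = e i m
    simp only [h1, h2, Fin.eta]
  have hev : ∀ (i : Fin k) (t : Term S ℕ),
      (t.bind fun n => Term.var (ren i n)).eval A E = t.eval A (e i) := by
    intro i t
    rw [Term.eval_bind]
    congr 1
    funext n
    exact hcomp i n
  refine ⟨Term.app ω (fun i => (p i).bind fun n => Term.var (ren i n)),
    Term.app ω (fun i => (q i).bind fun n => Term.var (ren i n)), E, ?_, ?_, ?_⟩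
  · exact conseq_app fun i => conseq_bind (hpq i) fun n => conseq_refl W _
  · show A.op ω _ = _
    refine congrArg _ (funext fun i => ?_)
    rw [hev i (p i), hp i]
  · show A.op ω _ = _
    refine congrArg _ (funext fun i => ?_)
    rw [hev i (q i), hq i]

/-- The congruence generated by the `W`-coherence relation. -/
def gammaCong (W : Set (Ident S)) (A : Alg S)
    (h0 : ∀ ω : S.symbols, 0 < S.arity ω) : Congruence A where
  rel := Relation.ReflTransGen (gammaRel W A)
  iseqv := ⟨fun _ => Relation.ReflTransGen.refl,
    fun h => closure_symm (fun _ _ h' => gamma_symm h') h,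
    fun h1 h2 => h1.trans h2⟩
  compat := by
    refine closure_compat A (gammaRel W A) ?_
    intro ω f j x y hxy
    refine gamma_compat W A h0 ω _ _ fun i => ?_
    by_cases hij : i = j
    · subst hij; simp only [Function.update_self]; exact hxy
    · simp only [Function.update_of_ne hij]; exact gamma_refl W A _

/-- The set of identities axiomatizing the Mal'tsev product. -/
def prodIdents (V W : Set (Ident S)) : Set (Ident S) :=
  {e | ∃ (t s : Term S ℕ) (σ : ℕ → Term S ℕ), Conseq V t s ∧
      (∀ i j, Conseq W (σ i) (σ j)) ∧ e.1 = t.bind σ ∧ e.2 = s.bind σ}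

end Aux4
section Aux5

variable {S : Signature}

theorem merge_step (V W : Set (Ident S)) (A : Alg S)
    (hE : A.Models (prodIdents V W))
    {u v : Term S ℕ} (hu : Conseq V (Term.var 0) u) (hw : Conseq W u v)
    (hv : Conseq V v (Term.var 1))
    (σ : ℕ → Term S ℕ) (env : ℕ → A.carrier)
    (hσ : ∀ i j, Conseq W (σ i) (σ j)) (k : ℕ) {x y : A.carrier}
    (hx : (σ k).eval A env = x) (hxy : gammaRel W A x y) :
    ∃ (σ' : ℕ → Term S ℕ) (env' : ℕ → A.carrier),
      (∀ i j, Conseq W (σ' i) (σ' j)) ∧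
      (∀ i, (σ' (i + 1)).eval A env' = (σ i).eval A env) ∧
      (σ' 0).eval A env' = y := by
  classical
  obtain ⟨p, q, f, hpq, hp, hq⟩ := hxy
  set env' : ℕ → A.carrier :=
    fun m => if m % 2 = 0 then env (m / 2) else f (m / 2) with henv'
  have heval_ev : ∀ t : Term S ℕ,
      (t.bind fun n => Term.var (2 * n)).eval A env' = t.eval A env := by
    intro t
    rw [Term.eval_bind]
    congr 1
    funext n
    show env' (2 * n) = env n
    have h1 : (2 * n) % 2 = 0 := by omega
    have h2 : (2 * n) / 2 = n := by omega
    simp [henv', h1, h2]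
  have heval_od : ∀ t : Term S ℕ,
      (t.bind fun n => Term.var (2 * n + 1)).eval A env' = t.eval A f := by
    intro t
    rw [Term.eval_bind]
    congr 1
    funext n
    show env' (2 * n + 1) = f n
    have h1 : ¬((2 * n + 1) % 2 = 0) := by omega
    have h2 : (2 * n + 1) / 2 = n := by omega
    simp [henv', h1, h2]
  set σe : ℕ → Term S ℕ := fun i => (σ i).bind fun n => Term.var (2 * n) with hσedef
  set p' : Term S ℕ := p.bind fun n => Term.var (2 * n + 1) with hp'def
  set q' : Term S ℕ := q.bind fun n => Term.var (2 * n + 1) with hq'def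
  have heσe : ∀ i, (σe i).eval A env' = (σ i).eval A env := fun i => heval_ev (σ i)
  have hep' : p'.eval A env' = x := by rw [hp'def, heval_od, hp]
  have heq' : q'.eval A env' = y := by rw [hq'def, heval_od, hq]
  have hσe : ∀ i j, Conseq W (σe i) (σe j) :=
    fun i j => conseq_bind (hσ i j) fun n => conseq_refl W _
  have hpq' : Conseq W p' q' := conseq_bind hpq fun n => conseq_refl W _
  set τ : ℕ → ℕ → Term S ℕ := fun j m => if m = 1 then p' else σe j with hτ
  set τ0 : ℕ → Term S ℕ := fun m => if m = 1 then q' else σe k with hτ0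
  set σ' : ℕ → Term S ℕ :=
    fun i => match i with
      | 0 => v.bind τ0
      | j + 1 => u.bind (τ j) with hσ'
  have hτev : ∀ j, (fun m => (τ j m).eval A env')
      = fun m => if m = 1 then x else (σ j).eval A env := by
    intro j
    funext m
    by_cases hm : m = 1
    · simp only [hτ, hm, if_pos rfl]
      exact hep'
    · simp only [hτ, hm, if_neg hm]
      exact heσe j
  refine ⟨σ', env', ?_, ?_, ?_⟩
  · -- pairwise W-equivalence
    have main : ∀ i j, Conseq W (σ' (i + 1)) (σ' (j + 1)) := by
      intro i j
      show Conseq W (u.bind (τ i)) (u.bind (τ j))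
      refine conseq_bind (conseq_refl W u) fun m => ?_
      by_cases hm : m = 1
      · simp only [hτ, hm, if_pos rfl]; exact conseq_refl W _
      · simp only [hτ, hm, if_neg hm]; exact hσe i j
    have cross : ∀ j, Conseq W (σ' 0) (σ' (j + 1)) := by
      intro j
      show Conseq W (v.bind τ0) (u.bind (τ j))
      refine conseq_bind (conseq_symm hw) fun m => ?_
      by_cases hm : m = 1
      · simp only [hτ, hτ0, hm, if_pos rfl]; exact conseq_symm hpq'
      · simp only [hτ, hτ0, hm, if_neg hm]; exact hσe k j
    intro i j
    match i, j with
    | 0, 0 => exact conseq_refl W _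
    | 0, j + 1 => exact cross j
    | i + 1, 0 => exact conseq_symm (cross i)
    | i + 1, j + 1 => exact main i j
  · -- values at positive indices
    intro i
    show (u.bind (τ i)).eval A env' = (σ i).eval A env
    have hmem : ((Term.var 0).bind (fun m => if m = 1 then σe k else σe i),
        u.bind (fun m => if m = 1 then σe k else σe i)) ∈ prodIdents V W := by
      refine ⟨Term.var 0, u, _, hu, fun m m' => ?_, rfl, rfl⟩
      by_cases hm : m = 1 <;> by_cases hm' : m' = 1 <;>
        simp only [hm, hm', if_pos, if_neg, ite_true, ite_false] <;>
        first
          | exact hσe k k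
          | exact hσe k i
          | exact hσe i k
          | exact hσe i i
    have hsat := hE _ hmem env'
    have hl : ((Term.var 0).bind fun m => if m = 1 then σe k else σe i).eval A env'
        = (σ i).eval A env := by
      show ((if (0:ℕ) = 1 then σe k else σe i)).eval A env' = _
      rw [if_neg (by omega : ¬(0:ℕ) = 1)]
      exact heσe i
    have hr : (u.bind fun m => if m = 1 then σe k else σe i).eval A env'
        = (u.bind (τ i)).eval A env' := by
      rw [Term.eval_bind, Term.eval_bind, hτev i]
      congr 1
      funext m
      by_cases hm : m = 1
      · simp only [hm, if_true]
        rw [heσe k, hx]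
      · simp only [hm, if_neg hm, if_false]
        exact heσe i
    rw [← hr, ← hsat, hl]
  · -- value at index 0
    show (v.bind τ0).eval A env' = y
    have hmem : (v.bind (fun m => if m = 1 then q' else p'),
        (Term.var 1).bind (fun m => if m = 1 then q' else p')) ∈ prodIdents V W := by
      refine ⟨v, Term.var 1, _, hv, fun m m' => ?_, rfl, rfl⟩
      by_cases hm : m = 1 <;> by_cases hm' : m' = 1 <;>
        simp only [hm, hm', if_pos, if_neg, ite_true, ite_false] <;>
        first
          | exact conseq_refl W _
          | exact hpq'
          | exact conseq_symm hpq'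
    have hsat := hE _ hmem env'
    have hl : ((Term.var 1).bind fun m => if m = 1 then q' else p').eval A env' = y := by
      show ((if (1:ℕ) = 1 then q' else p')).eval A env' = y
      rw [if_pos rfl]
      exact heq'
    have hr : (v.bind fun m => if m = 1 then q' else p').eval A env'
        = (v.bind τ0).eval A env' := by
      rw [Term.eval_bind, Term.eval_bind]
      congr 1
      funext m
      by_cases hm : m = 1
      · simp only [hτ0, hm, if_true]
      · simp only [hτ0, hm, if_neg hm, if_false]
        rw [hep', heσe k, hx]
    rw [← hr, hsat, hl]

theorem merge_chain (V W : Set (Ident S)) (A : Alg S)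
    (hE : A.Models (prodIdents V W))
    {u v : Term S ℕ} (hu : Conseq V (Term.var 0) u) (hw : Conseq W u v)
    (hv : Conseq V v (Term.var 1)) {x y : A.carrier}
    (hxy : Relation.ReflTransGen (gammaRel W A) x y) :
    ∀ (σ : ℕ → Term S ℕ) (env : ℕ → A.carrier),
      (∀ i j, Conseq W (σ i) (σ j)) → ∀ k, (σ k).eval A env = x →
      ∃ (σ' : ℕ → Term S ℕ) (env' : ℕ → A.carrier) (ι : ℕ → ℕ) (k' : ℕ),
        (∀ i j, Conseq W (σ' i) (σ' j)) ∧
        (∀ i, (σ' (ι i)).eval A env' = (σ i).eval A env) ∧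
        (σ' k').eval A env' = y := by
  induction hxy using Relation.ReflTransGen.head_induction_on with
  | refl =>
      intro σ env hσ k hk
      exact ⟨σ, env, id, k, hσ, fun i => rfl, hk⟩
  | head hac hcb ih =>
      intro σ env hσ k hk
      obtain ⟨σ₁, env₁, hσ₁, hshift, h0val⟩ :=
        merge_step V W A hE hu hw hv σ env hσ k hk hac
      obtain ⟨σ', env', ι', k', hσ', hvals', hk'⟩ := ih σ₁ env₁ hσ₁ 0 h0val
      refine ⟨σ', env', fun i => ι' (i + 1), k', hσ', fun i => ?_, hk'⟩
      rw [hvals' (i + 1), hshift i]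

theorem key_lemma (V W : Set (Ident S)) (A : Alg S)
    (hE : A.Models (prodIdents V W))
    {u v : Term S ℕ} (hu : Conseq V (Term.var 0) u) (hw : Conseq W u v)
    (hv : Conseq V v (Term.var 1)) (a : A.carrier) (c : ℕ → A.carrier)
    (hc : ∀ i, Relation.ReflTransGen (gammaRel W A) a (c i)) :
    ∀ N : ℕ, ∃ (σ : ℕ → Term S ℕ) (env : ℕ → A.carrier),
      (∀ i j, Conseq W (σ i) (σ j)) ∧ (∀ i, i < N → (σ i).eval A env = c i) := by
  classical
  have main : ∀ N : ℕ, ∃ (σ : ℕ → Term S ℕ) (env : ℕ → A.carrier),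
      (∀ i j, Conseq W (σ i) (σ j)) ∧ (∀ i, i < N → (σ i).eval A env = c i) ∧
      ∃ K, (σ K).eval A env = a := by
    intro N
    induction N with
    | zero =>
        exact ⟨fun _ => Term.var 0, fun _ => a, fun i j => conseq_refl W _,
          fun i h => absurd h (by omega), 0, rfl⟩
    | succ N ih =>
        obtain ⟨σ, env, hσ, hvals, K, hK⟩ := ih
        obtain ⟨σ', env', ι, k', hσ', hvals', hk'⟩ :=
          merge_chain V W A hE hu hw hv (hc N) σ env hσ K hK
        set ψ : ℕ → ℕ := fun i => if i < N then ι i else if i = N then k' else ι K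
          with hψ
        refine ⟨fun i => σ' (ψ i), env', fun i j => hσ' (ψ i) (ψ j), ?_, N + 1, ?_⟩
        · intro i hi
          by_cases hiN : i < N
          · simp only [hψ, if_pos hiN]
            rw [hvals' i, hvals i hiN]
          · have hieq : i = N := by omega
            simp only [hψ, hieq, if_neg (by omega : ¬(N < N)), if_pos rfl]
            exact hk'
        · have : ψ (N + 1) = ι K := by
            simp only [hψ, if_neg (by omega : ¬(N + 1 < N)),
              if_neg (by omega : ¬(N + 1 = N))]
          show (σ' (ψ (N + 1))).eval A env' = a
          rw [this, hvals' K, hK]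
  intro N
  obtain ⟨σ, env, h1, h2, _⟩ := main N
  exact ⟨σ, env, h1, h2⟩

end Aux5
section Aux6

variable {S : Signature}

theorem sound_lemma (V W : Set (Ident S))
    (hWidem : ∀ A : Alg S, A.Models W → ∀ a : A.carrier, A.IsIdem a)
    (A : Alg S) (hA : InMaltsev V W A) : A.Models (prodIdents V W) := by
  obtain ⟨θ, hWq, hV⟩ := hA
  rintro ⟨e1, e2⟩ ⟨t, s, σ, hts, hσ, h1, h2⟩
  simp only at h1 h2
  subst h1
  subst h2
  intro env
  set av : ℕ → A.carrier := fun n => (σ n).eval A env with hav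
  have hrel : ∀ n, θ.rel (av 0) (av n) := by
    intro n
    have h3 := hσ n 0 (A.quot θ) hWq (fun m => Quotient.mk θ.setoid (env m))
    rw [eval_quot, eval_quot] at h3
    exact θ.iseqv.symm (@Quotient.exact _ θ.setoid _ _ h3)
  have hidem := hWidem (A.quot θ) hWq
  have hsub : A.IsSubuniverse {b | θ.rel (av 0) b} := by
    intro ω cc hcc
    show θ.rel (av 0) (A.op ω cc)
    have hmk : Quotient.mk θ.setoid (A.op ω cc) = Quotient.mk θ.setoid (av 0) := by
      rw [← quot_op A θ cc]
      have hfn : (fun i => Quotient.mk θ.setoid (cc i))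
          = fun _ => Quotient.mk θ.setoid (av 0) :=
        funext fun i => Quotient.sound (θ.iseqv.symm (hcc i))
      rw [hfn]
      exact hidem (Quotient.mk θ.setoid (av 0)) ω
    exact θ.iseqv.symm (@Quotient.exact _ θ.setoid _ _ hmk)
  have hMV := hV (av 0) hsub
  set env' : ℕ → (A.subAlg {b | θ.rel (av 0) b} hsub ⟨av 0, θ.iseqv.refl _⟩).carrier :=
    fun n => ⟨av n, hrel n⟩ with henv'
  have hsat := hts _ hMV env'
  have hts' : t.eval A av = s.eval A av := by
    have hh1 := subAlg_eval A hsub ⟨av 0, θ.iseqv.refl _⟩ env' t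
    have hh2 := subAlg_eval A hsub ⟨av 0, θ.iseqv.refl _⟩ env' s
    calc t.eval A av = (t.eval _ env').1 := hh1.symm
      _ = (s.eval _ env').1 := by rw [hsat]
      _ = s.eval A av := hh2
  show (t.bind σ).eval A env = (s.bind σ).eval A env
  rw [Term.eval_bind, Term.eval_bind]
  exact hts'

theorem complete_lemma (V W : Set (Ident S))
    (h0 : ∀ ω : S.symbols, 0 < S.arity ω) (A : Alg S)
    (hE : A.Models (prodIdents V W))
    {u v : Term S ℕ} (hu : Conseq V (Term.var 0) u) (hw : Conseq W u v)
    (hv : Conseq V v (Term.var 1)) : InMaltsev V W A := by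
  refine ⟨gammaCong W A h0, ?_, ?_⟩
  · -- the quotient models W
    intro e he env
    have henv : env = fun n => Quotient.mk (gammaCong W A h0).setoid (env n).out :=
      funext fun n => (Quotient.out_eq _).symm
    rw [henv, eval_quot, eval_quot]
    refine Quotient.sound (Relation.ReflTransGen.single ?_)
    exact ⟨e.1, e.2, fun n => (env n).out, conseq_of_mem he, rfl, rfl⟩
  · -- every class is in V
    intro a hsub e he env
    set c : ℕ → A.carrier := fun i => (env i).1 with hc
    have hrel : ∀ i, Relation.ReflTransGen (gammaRel W A) a (c i) := fun i => (env i).2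
    obtain ⟨σf, envf, hσf, hvals⟩ := key_lemma V W A hE hu hw hv a c hrel
      (max e.1.bound e.2.bound)
    have hmem : (e.1.bind σf, e.2.bind σf) ∈ prodIdents V W :=
      ⟨e.1, e.2, σf, conseq_of_mem he, hσf, rfl, rfl⟩
    have hsat := hE _ hmem envf
    apply Subtype.ext
    have hh1 := subAlg_eval A hsub ⟨a, (gammaCong W A h0).iseqv.refl _⟩ env e.1
    have hh2 := subAlg_eval A hsub ⟨a, (gammaCong W A h0).iseqv.refl _⟩ env e.2
    rw [hh1, hh2]
    calc e.1.eval A (fun n => (env n).1)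
        = e.1.eval A (fun n => (σf n).eval A envf) :=
          Term.eval_congr A e.1 fun n hn =>
            (hvals n (lt_of_lt_of_le hn (le_max_left _ _))).symm
      _ = (e.1.bind σf).eval A envf := (Term.eval_bind A σf envf e.1).symm
      _ = (e.2.bind σf).eval A envf := hsat
      _ = e.2.eval A (fun n => (σf n).eval A envf) := Term.eval_bind A σf envf e.2
      _ = e.2.eval A (fun n => (env n).1) :=
          Term.eval_congr A e.2 fun n hn =>
            hvals n (lt_of_lt_of_le hn (le_max_right _ _))

end Aux6
/-- Let `V` and `W` be subvarieties of a variety `U`, with `W`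
idempotent. If `V ∩ W` is the trivial variety and `U` is congruence
`3`-permutable, then the Mal'tsev product `V ∘ W` is a variety. -/
theorem stmt_15 (S : Signature) (h0 : ∀ ω : S.symbols, 0 < S.arity ω)
    (U V W : Set (Ident S))
    (hVU : ∀ A : Alg S, A.Models V → A.Models U)
    (hWU : ∀ A : Alg S, A.Models W → A.Models U)
    (hWidem : ∀ A : Alg S, A.Models W → ∀ a : A.carrier, A.IsIdem a)
    (htriv : ∀ A : Alg S, A.Models V → A.Models W → Subsingleton A.carrier)
    (h3perm : ∀ A : Alg S, A.Models U →
      ∀ α β : Congruence A, ThreePerm α.rel β.rel) :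
    IsVarietyClass (InMaltsev V W) := by
  obtain ⟨u, v, hu, hw, hv⟩ := switch_exists U V W hVU hWU htriv h3perm
  refine ⟨prodIdents V W, fun A => ⟨sound_lemma V W hWidem A, fun hE =>
    complete_lemma V W h0 A hE hu hw hv⟩⟩
end

section
/- Let V be a congruence permutable variety and W an idempotent variety of the same similarity type without nullary operation symbols. If the intersection V ∩ W is the trivial variety, then the Mal'tsev product V ∘ W is a variety. -/
set_option linter.unusedVariables false
namespace St16
variable {S : Signature}

def IsHom (A B : Alg S) (f : A.carrier → B.carrier) : Prop :=
  ∀ ω a, f (A.op ω a) = B.op ω (fun i => f (a i))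

lemma eval_hom {A B : Alg S} {f : A.carrier → B.carrier} (hf : IsHom A B f) {X : Type}
    (env : X → A.carrier) (t : Term S X) :
    Term.eval B (fun x => f (env x)) t = f (Term.eval A env t) := by
  induction t with
  | var x => rfl
  | app ω ts ih =>
      show B.op ω (fun i => Term.eval B (fun x => f (env x)) (ts i))
        = f (A.op ω fun i => Term.eval A env (ts i))
      rw [hf ω]
      congr 1
      funext i
      exact ih i

def tvars {X : Type} : Term S X → List X
  | .var x => [x]
  | .app ω ts => (List.finRange (S.arity ω)).flatMap fun i => tvars (ts i)

lemma eval_congr_vars {A : Alg S} {X : Type} {env₁ env₂ : X → A.carrier} :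
    ∀ t : Term S X, (∀ x ∈ tvars t, env₁ x = env₂ x) →
      Term.eval A env₁ t = Term.eval A env₂ t
  | .var x, h => h x (by simp [tvars])
  | .app ω ts, h => by
      show A.op ω _ = A.op ω _
      congr 1
      funext i
      refine eval_congr_vars (ts i) (fun x hx => h x ?_)
      simp only [tvars, List.mem_flatMap]
      exact ⟨i, List.mem_finRange i, hx⟩

lemma models_surj {A B : Alg S} {f : A.carrier → B.carrier} (hf : IsHom A B f)
    (hsurj : Function.Surjective f) {E : Set (Ident S)} (hA : A.Models E) : B.Models E := by
  intro e he env
  choose env' henv' using fun n => hsurj (env n)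
  have h1 : env = fun n => f (env' n) := funext fun n => (henv' n).symm
  rw [h1, eval_hom hf, eval_hom hf, hA e he]

lemma subAlg_val_hom {A : Alg S} (B : Set A.carrier) (h : A.IsSubuniverse B) (hne : B.Nonempty) :
    IsHom (A.subAlg B h hne) A (Subtype.val) := fun _ _ => rfl

lemma rel_out_mk {A : Alg S} (θ : Congruence A) (a : A.carrier) :
    θ.rel (Quotient.mk θ.setoid a).out a :=
  Quotient.exact (Quotient.out_eq (Quotient.mk θ.setoid a))

lemma mk_hom (A : Alg S) (θ : Congruence A) : IsHom A (A.quot θ) (Quotient.mk θ.setoid) := by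
  intro ω a
  refine (Quotient.sound ?_).symm
  exact θ.compat ω _ _ fun i => rel_out_mk θ (a i)

lemma eval_congr_rel {A : Alg S} (θ : Congruence A) {X : Type} {e₁ e₂ : X → A.carrier}
    (h : ∀ x, θ.rel (e₁ x) (e₂ x)) (t : Term S X) :
    θ.rel (Term.eval A e₁ t) (Term.eval A e₂ t) := by
  induction t with
  | var x => exact h x
  | app ω ts ih => exact θ.compat ω _ _ ih

lemma getD_indexOf {α : Type} [DecidableEq α] :
    ∀ (l : List α) (x d : α), x ∈ l → l.getD (l.idxOf x) d = x := by
  intro l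
  induction l with
  | nil => intro x d h; cases h
  | cons a t ih =>
      intro x d h
      by_cases hx : x = a
      · subst hx; simp
      · have hmem : x ∈ t := by
          rcases List.mem_cons.1 h with h1 | h1
          · exact absurd h1 hx
          · exact h1
        rw [List.idxOf_cons_ne _ (fun h' => hx h'.symm)]
        simpa using ih x d hmem

def TermAlg (S : Signature) (X : Type) (hne : Nonempty X) : Alg S :=
  ⟨Term S X, Term.app, hne.map Term.var⟩

lemma eval_eval {A : Alg S} {X Y : Type} (hX : Nonempty X) (σ : Y → Term S X)
    (env : X → A.carrier) (t : Term S Y) :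
    Term.eval A env (Term.eval (TermAlg S X hX) σ t)
      = Term.eval A (fun y => Term.eval A env (σ y)) t := by
  induction t with
  | var y => rfl
  | app ω ts ih =>
      show Term.eval A env (Term.app ω _) = _
      show A.op ω _ = A.op ω _
      congr 1
      funext i
      exact ih i

end St16
namespace St16
variable {S : Signature}

/-- semantic equivalence of terms relative to a class `P` of algebras -/
def semRel (P : Alg S → Prop) {X : Type} (s t : Term S X) : Prop :=
  ∀ B : Alg S, P B → ∀ env : X → B.carrier, Term.eval B env s = Term.eval B env t

def semCong (P : Alg S → Prop) (X : Type) (hX : Nonempty X) :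
    Congruence (TermAlg S X hX) where
  rel := semRel P
  iseqv := ⟨fun _ _ _ _ => rfl, fun h B hB env => (h B hB env).symm,
    fun h1 h2 B hB env => (h1 B hB env).trans (h2 B hB env)⟩
  compat := by
    intro ω a b h B hB env
    show B.op ω _ = B.op ω _
    congr 1
    funext i
    exact h i B hB env

noncomputable def freeAlg (P : Alg S → Prop) (X : Type) (hX : Nonempty X) : Alg S :=
  (TermAlg S X hX).quot (semCong P X hX)

lemma freeAlg_models (P : Alg S → Prop) {E₀ : Set (Ident S)}
    (h : ∀ B, P B → B.Models E₀) (X : Type) (hX : Nonempty X) :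
    (freeAlg P X hX).Models E₀ := by
  intro e he env
  have henv : env = fun n => Quotient.mk (semCong P X hX).setoid ((env n).out) :=
    funext fun n => (Quotient.out_eq _).symm
  unfold freeAlg at *
  rw [henv, eval_hom (mk_hom (TermAlg S X hX) (semCong P X hX)),
     eval_hom (mk_hom (TermAlg S X hX) (semCong P X hX))]
  refine Quotient.sound ?_
  intro B hB envB
  exact (eval_eval hX _ envB e.1).trans ((h B hB e he _).trans (eval_eval hX _ envB e.2).symm)

/-- substitution of variables -/
def rnm {X Y : Type} (hX : Nonempty X) (f : Y → X) (t : Term S Y) : Term S X :=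
  Term.eval (TermAlg S X hX) (fun y => Term.var (f y)) t

lemma eval_rnm {A : Alg S} {X Y : Type} (hX : Nonempty X) (f : Y → X)
    (env : X → A.carrier) (t : Term S Y) :
    Term.eval A env (rnm hX f t) = Term.eval A (fun y => env (f y)) t := by
  unfold rnm; rw [eval_eval]; rfl

lemma semRel_rnm {P : Alg S → Prop} {X Y : Type} (hX : Nonempty X) (f : Y → X)
    {s t : Term S Y} (h : semRel P s t) : semRel P (rnm hX f s) (rnm hX f t) := by
  intro B hB env
  rw [eval_rnm, eval_rnm]
  exact h B hB _

def kerCong {A B : Alg S} (f : A.carrier → B.carrier) (hf : IsHom A B f) : Congruence A where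
  rel x y := f x = f y
  iseqv := ⟨fun _ => rfl, Eq.symm, Eq.trans⟩
  compat := by
    intro ω a b h
    show f (A.op ω a) = f (A.op ω b)
    rw [hf, hf]
    congr 1
    funext i
    exact h i

/-- the renaming endomorphism of a free algebra -/
noncomputable def renEnd (P : Alg S → Prop) {X : Type} (hX : Nonempty X) (f : X → X)
    (q : (freeAlg P X hX).carrier) : (freeAlg P X hX).carrier :=
  Quotient.mk (semCong P X hX).setoid (rnm hX f q.out)

lemma renEnd_mk (P : Alg S → Prop) {X : Type} (hX : Nonempty X) (f : X → X) (t : Term S X) :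
    renEnd P hX f (Quotient.mk (semCong P X hX).setoid t)
      = Quotient.mk (semCong P X hX).setoid (rnm hX f t) :=
  Quotient.sound (semRel_rnm hX f (rel_out_mk (semCong P X hX) t))

lemma renEnd_hom (P : Alg S → Prop) {X : Type} (hX : Nonempty X) (f : X → X) :
    IsHom (freeAlg P X hX) (freeAlg P X hX) (renEnd P hX f) := by
  intro ω a
  show renEnd P hX f (Quotient.mk _ (Term.app ω fun i => (a i).out)) = _
  rw [renEnd_mk]
  show _ = Quotient.mk _ (Term.app ω fun i => (renEnd P hX f (a i)).out)
  refine Quotient.sound ?_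
  refine (semCong P X hX).compat ω _ _ ?_
  intro i
  show semRel P (rnm hX f ((a i).out)) ((renEnd P hX f (a i)).out)
  have h2 : (renEnd P hX f (a i)) = Quotient.mk (semCong P X hX).setoid (rnm hX f ((a i).out)) := rfl
  rw [h2]
  exact (semCong P X hX).iseqv.symm (rel_out_mk (semCong P X hX) _)

end St16
namespace St16
variable {S : Signature}

lemma rnm_var {X Y : Type} (hX : Nonempty X) (f : Y → X) (y : Y) :
    rnm hX f (Term.var y : Term S Y) = Term.var (f y) := rfl

lemma maltsev_term (V : Set (Ident S))
    (hVperm : ∀ A : Alg S, A.Models V →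
      ∀ α β : Congruence A, RelComp α.rel β.rel = RelComp β.rel α.rel) :
    ∃ p : Term S (Fin 3),
      (∀ C : Alg S, C.Models V → ∀ env : Fin 3 → C.carrier,
          env 1 = env 2 → Term.eval C env p = env 0) ∧
      (∀ C : Alg S, C.Models V → ∀ env : Fin 3 → C.carrier,
          env 0 = env 1 → Term.eval C env p = env 2) := by
  have hX : Nonempty (Fin 3) := ⟨0⟩
  set P : Alg S → Prop := fun C => C.Models V with hP
  have hFV : (freeAlg P (Fin 3) hX).Models V := freeAlg_models P (fun B hB => hB) _ hX
  set rσ : Fin 3 → Fin 3 := ![0, 0, 2] with hrσ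
  set rτ : Fin 3 → Fin 3 := ![0, 2, 2] with hrτ
  set α := kerCong _ (renEnd_hom P hX rσ) with hα
  set β := kerCong _ (renEnd_hom P hX rτ) with hβ
  have key := hVperm _ hFV α β
  set mkv : Term S (Fin 3) → (freeAlg P (Fin 3) hX).carrier :=
    fun t => Quotient.mk (semCong P (Fin 3) hX).setoid t with hmkv
  have h1 : RelComp α.rel β.rel (mkv (Term.var 0)) (mkv (Term.var 2)) := by
    refine ⟨mkv (Term.var 1), ?_, ?_⟩
    · show renEnd P hX rσ (mkv (Term.var 0)) = renEnd P hX rσ (mkv (Term.var 1))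
      rw [renEnd_mk, renEnd_mk, rnm_var, rnm_var]
      norm_num [hrσ]
      rfl
    · show renEnd P hX rτ (mkv (Term.var 1)) = renEnd P hX rτ (mkv (Term.var 2))
      rw [renEnd_mk, renEnd_mk, rnm_var, rnm_var]
      norm_num [hrτ]
      rfl
  rw [key] at h1
  obtain ⟨m, hβm, hαm⟩ := h1
  refine ⟨m.out, ?_, ?_⟩
  · -- from hβm : τ (var 0) = τ m
    have hβm' : renEnd P hX rτ (mkv (Term.var 0)) = renEnd P hX rτ m := hβm
    rw [renEnd_mk, rnm_var] at hβm'
    have hτm : renEnd P hX rτ m = Quotient.mk (semCong P (Fin 3) hX).setoid (rnm hX rτ m.out) := rfl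
    rw [hτm] at hβm'
    have hsem : semRel P (Term.var (rτ 0)) (rnm hX rτ m.out) := Quotient.exact hβm'
    intro C hC env h12
    have := hsem C hC env
    have := this.trans (eval_rnm hX rτ env _)
    have henv : (fun y => env (rτ y)) = env := by
      funext i
      fin_cases i <;> simp [hrτ]
      exact h12.symm
    rw [henv] at this
    have h0 : Term.eval C env (Term.var (rτ 0)) = env 0 := by
      simp [hrτ, Term.eval]
    rw [h0] at this
    exact this.symm
  · have hαm' : renEnd P hX rσ m = renEnd P hX rσ (mkv (Term.var 2)) := hαm
    rw [renEnd_mk, rnm_var] at hαm'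
    have hσm : renEnd P hX rσ m = Quotient.mk (semCong P (Fin 3) hX).setoid (rnm hX rσ m.out) := rfl
    rw [hσm] at hαm'
    have hsem : semRel P (rnm hX rσ m.out) (Term.var (rσ 2)) := Quotient.exact hαm'
    intro C hC env h01
    have := hsem C hC env
    have := (eval_rnm hX rσ env _).symm.trans this
    have henv : (fun y => env (rσ y)) = env := by
      funext i
      fin_cases i <;> simp [hrσ]
      exact h01
    rw [henv] at this
    have h2 : Term.eval C env (Term.var (rσ 2)) = env 2 := by
      simp [hrσ, Term.eval]
    rw [h2] at this
    exact this

end St16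
namespace St16
variable {S : Signature}

def IsWit (V W : Set (Ident S)) (B : Alg S) (θ : Congruence B) : Prop :=
  (B.quot θ).Models W ∧
    ∀ a : B.carrier, ∀ h : B.IsSubuniverse {b | θ.rel a b},
      (B.subAlg {b | θ.rel a b} h ⟨a, θ.iseqv.refl a⟩).Models V

lemma inMaltsev_iff (V W : Set (Ident S)) (B : Alg S) :
    InMaltsev V W B ↔ ∃ θ : Congruence B, IsWit V W B θ := Iff.rfl

section
variable {V W : Set (Ident S)}
variable (hWidem : ∀ A : Alg S, A.Models W → ∀ a : A.carrier, A.IsIdem a)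

include hWidem in
lemma class_subuniv {B : Alg S} {θ : Congruence B} (hq : (B.quot θ).Models W)
    (a : B.carrier) : B.IsSubuniverse {b | θ.rel a b} := by
  intro ω f hf
  have h1 : θ.rel (B.op ω f) (B.op ω (fun _ => a)) :=
    θ.compat ω _ _ (fun i => θ.iseqv.symm (hf i))
  have h2 : Quotient.mk θ.setoid (B.op ω (fun _ => a))
      = (B.quot θ).op ω (fun _ => Quotient.mk θ.setoid a) := mk_hom B θ ω (fun _ => a)
  have h3 := hWidem (B.quot θ) hq (Quotient.mk θ.setoid a) ω
  have h4 : θ.rel (B.op ω (fun _ => a)) a := Quotient.exact (h2.trans h3)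
  exact θ.iseqv.symm (θ.iseqv.trans h1 h4)

variable {p : Term S (Fin 3)}
variable (hM1 : ∀ C : Alg S, C.Models V → ∀ env : Fin 3 → C.carrier,
    env 1 = env 2 → Term.eval C env p = env 0)
variable (hM2 : ∀ C : Alg S, C.Models V → ∀ env : Fin 3 → C.carrier,
    env 0 = env 1 → Term.eval C env p = env 2)

include hWidem hM1 in
lemma pM1 {B : Alg S} {θ : Congruence B} (hwit : IsWit V W B θ)
    {u s : B.carrier} (h : θ.rel u s) : Term.eval B ![s, u, u] p = s := by
  have hsub := class_subuniv hWidem hwit.1 u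
  set C := B.subAlg {b | θ.rel u b} hsub ⟨u, θ.iseqv.refl u⟩ with hC
  have hCV := hwit.2 u hsub
  set envC : Fin 3 → C.carrier := ![⟨s, h⟩, ⟨u, θ.iseqv.refl u⟩, ⟨u, θ.iseqv.refl u⟩] with henvC
  have h1 := hM1 C hCV envC (by simp [henvC]; rfl)
  have h2 := eval_hom (subAlg_val_hom _ hsub _) envC p
  have h3 : (fun x => (envC x).val) = ![s, u, u] := by
    funext i; fin_cases i <;> rfl
  rw [h3] at h2
  rw [h2, h1]
  rfl

include hWidem hM2 in
lemma pM2 {B : Alg S} {θ : Congruence B} (hwit : IsWit V W B θ)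
    {u t : B.carrier} (h : θ.rel u t) : Term.eval B ![u, u, t] p = t := by
  have hsub := class_subuniv hWidem hwit.1 u
  set C := B.subAlg {b | θ.rel u b} hsub ⟨u, θ.iseqv.refl u⟩ with hC
  have hCV := hwit.2 u hsub
  set envC : Fin 3 → C.carrier := ![⟨u, θ.iseqv.refl u⟩, ⟨u, θ.iseqv.refl u⟩, ⟨t, h⟩] with henvC
  have h1 := hM2 C hCV envC (by simp [henvC]; rfl)
  have h2 := eval_hom (subAlg_val_hom _ hsub _) envC p
  have h3 : (fun x => (envC x).val) = ![u, u, t] := by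
    funext i; fin_cases i <;> rfl
  rw [h3] at h2
  rw [h2, h1]
  rfl

end
end St16
namespace St16
variable {S : Signature}

section
variable (V W : Set (Ident S))

noncomputable def KF (X : Type) (hX : Nonempty X) : Alg S := freeAlg (InMaltsev V W) X hX

noncomputable def KTheta (X : Type) (hX : Nonempty X) : Congruence (KF V W X hX) where
  rel q₁ q₂ := ∀ (B : Alg S) (θ : Congruence B), IsWit V W B θ → ∀ env : X → B.carrier,
    θ.rel (Term.eval B env q₁.out) (Term.eval B env q₂.out)
  iseqv := by
    refine ⟨fun q B θ hw env => θ.iseqv.refl _, fun h B θ hw env => θ.iseqv.symm (h B θ hw env),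
      fun h1 h2 B θ hw env => θ.iseqv.trans (h1 B θ hw env) (h2 B θ hw env)⟩
  compat := by
    intro ω a b h B θ hw env
    have hBK : InMaltsev V W B := ⟨θ, hw⟩
    have houta : Term.eval B env (((KF V W X hX).op ω a).out)
        = B.op ω (fun i => Term.eval B env ((a i).out)) := by
      have h1 : semRel (InMaltsev V W) (((KF V W X hX).op ω a).out)
          (Term.app ω (fun i => (a i).out)) := rel_out_mk (semCong (InMaltsev V W) X hX) _
      exact h1 B hBK env
    have houtb : Term.eval B env (((KF V W X hX).op ω b).out)
        = B.op ω (fun i => Term.eval B env ((b i).out)) := by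
      have h1 : semRel (InMaltsev V W) (((KF V W X hX).op ω b).out)
          (Term.app ω (fun i => (b i).out)) := rel_out_mk (semCong (InMaltsev V W) X hX) _
      exact h1 B hBK env
    rw [houta, houtb]
    exact θ.compat ω _ _ (fun i => h i B θ hw env)

variable {X : Type} {hX : Nonempty X}

lemma KF_quot_W (hWidem : ∀ A : Alg S, A.Models W → ∀ a : A.carrier, A.IsIdem a) :
    ((KF V W X hX).quot (KTheta V W X hX)).Models W := by
  set Θ := KTheta V W X hX with hΘ
  set Ψ := semCong (InMaltsev V W) X hX with hΨ
  intro e he env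
  set x : ℕ → (KF V W X hX).carrier := fun n => (env n).out with hx
  set s : ℕ → Term S X := fun n => (x n).out with hs
  have henv : env = fun n => Quotient.mk Θ.setoid (x n) := funext fun n => (Quotient.out_eq _).symm
  rw [henv, eval_hom (mk_hom _ Θ), eval_hom (mk_hom _ Θ)]
  have hxmk : x = fun n => Quotient.mk Ψ.setoid (s n) := funext fun n => (Quotient.out_eq _).symm
  have hev : ∀ t : Term S ℕ, Term.eval (KF V W X hX) x t
      = Quotient.mk Ψ.setoid (Term.eval (TermAlg S X hX) s t) := by
    intro t
    rw [hxmk]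
    exact eval_hom (mk_hom (TermAlg S X hX) Ψ) s t
  rw [hev, hev]
  refine Quotient.sound ?_
  intro B θ hw envB
  have hBK : InMaltsev V W B := ⟨θ, hw⟩
  have hout1 : Term.eval B envB ((Quotient.mk Ψ.setoid (Term.eval (TermAlg S X hX) s e.1)).out)
      = Term.eval B envB (Term.eval (TermAlg S X hX) s e.1) :=
    (rel_out_mk Ψ _) B hBK envB
  have hout2 : Term.eval B envB ((Quotient.mk Ψ.setoid (Term.eval (TermAlg S X hX) s e.2)).out)
      = Term.eval B envB (Term.eval (TermAlg S X hX) s e.2) :=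
    (rel_out_mk Ψ _) B hBK envB
  rw [hout1, hout2, eval_eval, eval_eval]
  set b : ℕ → B.carrier := fun n => Term.eval B envB (s n) with hb
  have hsat := hw.1 e he (fun n => Quotient.mk θ.setoid (b n))
  rw [eval_hom (mk_hom B θ), eval_hom (mk_hom B θ)] at hsat
  exact Quotient.exact hsat

lemma KF_classes_V (hWidem : ∀ A : Alg S, A.Models W → ∀ a : A.carrier, A.IsIdem a) :
    ∀ a₀ : (KF V W X hX).carrier,
    ∀ h : (KF V W X hX).IsSubuniverse {b | (KTheta V W X hX).rel a₀ b},
      ((KF V W X hX).subAlg {b | (KTheta V W X hX).rel a₀ b} h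
        ⟨a₀, (KTheta V W X hX).iseqv.refl a₀⟩).Models V := by
  intro a₀ hZ e he env
  set Θ := KTheta V W X hX with hΘ
  set Ψ := semCong (InMaltsev V W) X hX with hΨ
  set q : ℕ → (KF V W X hX).carrier := fun n => (env n).val with hq
  have hqrel : ∀ n, Θ.rel a₀ (q n) := fun n => (env n).2
  set s : ℕ → Term S X := fun n => (q n).out with hs
  have hval : ∀ t : Term S ℕ,
      (Term.eval ((KF V W X hX).subAlg {b | Θ.rel a₀ b} hZ ⟨a₀, Θ.iseqv.refl a₀⟩) env t).val
        = Term.eval (KF V W X hX) q t := by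
    intro t
    exact (eval_hom (subAlg_val_hom _ hZ _) env t).symm
  refine Subtype.ext ?_
  rw [hval, hval]
  have hqmk : q = fun n => Quotient.mk Ψ.setoid (s n) := funext fun n => (Quotient.out_eq _).symm
  have hev : ∀ t : Term S ℕ, Term.eval (KF V W X hX) q t
      = Quotient.mk Ψ.setoid (Term.eval (TermAlg S X hX) s t) := by
    intro t
    rw [hqmk]
    exact eval_hom (mk_hom (TermAlg S X hX) Ψ) s t
  rw [hev, hev]
  refine Quotient.sound ?_
  intro B hB envB
  obtain ⟨θB, hwB⟩ := hB
  rw [eval_eval, eval_eval]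
  set b : ℕ → B.carrier := fun n => Term.eval B envB (s n) with hb
  set b0 : B.carrier := Term.eval B envB (a₀.out) with hb0
  have hrel : ∀ n, θB.rel b0 (b n) := fun n => hqrel n B θB hwB envB
  have hsubB := class_subuniv hWidem hwB.1 b0
  have hCV := hwB.2 b0 hsubB
  set envB' : ℕ → (B.subAlg {c | θB.rel b0 c} hsubB ⟨b0, θB.iseqv.refl b0⟩).carrier :=
    fun n => ⟨b n, hrel n⟩ with henvB'
  have hbform : b = fun n => (envB' n).val := rfl
  rw [hbform]
  exact (eval_hom (subAlg_val_hom _ hsubB _) envB' e.1).trans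
    ((congrArg Subtype.val (hCV e he envB')).trans (eval_hom (subAlg_val_hom _ hsubB _) envB' e.2).symm)

end
end St16
namespace St16
variable {S : Signature}

def idsOf (P : Alg S → Prop) : Set (Ident S) := {e | ∀ B, P B → B.sat e.1 e.2}

lemma transfer {P : Alg S → Prop} {A : Alg S} (hAE : A.Models (idsOf P)) {X : Type}
    (hX : Nonempty X) {s t : Term S X} (h : semRel P s t) (env₀ : X → A.carrier) :
    Term.eval A env₀ s = Term.eval A env₀ t := by
  classical
  obtain ⟨x₀⟩ := hX
  set L := (tvars s ++ tvars t).dedup with hL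
  set f : X → ℕ := fun x => L.idxOf x with hf
  set gg : ℕ → X := fun n => L.getD n x₀ with hgg
  have hN : Nonempty ℕ := ⟨0⟩
  have hgf : ∀ x ∈ L, gg (f x) = x := fun x hx => getD_indexOf L x x₀ hx
  have hE : (rnm hN f s, rnm hN f t) ∈ idsOf P := by
    intro B hB envB
    rw [eval_rnm, eval_rnm]
    exact h B hB _
  have hsat := hAE _ hE (fun n => env₀ (gg n))
  simp only [eval_rnm] at hsat
  have h1 : Term.eval A env₀ s = Term.eval A (fun x => env₀ (gg (f x))) s := by
    refine eval_congr_vars s (fun x hx => ?_)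
    rw [hgf x (by rw [hL]; exact List.mem_dedup.2 (List.mem_append_left _ hx))]
  have h2 : Term.eval A env₀ t = Term.eval A (fun x => env₀ (gg (f x))) t := by
    refine eval_congr_vars t (fun x hx => ?_)
    rw [hgf x (by rw [hL]; exact List.mem_dedup.2 (List.mem_append_right _ hx))]
  rw [h1, h2]
  exact hsat

section
variable (V W : Set (Ident S)) (A : Alg S)

noncomputable def gmap : (KF V W A.carrier A.nonempty).carrier → A.carrier :=
  fun q => Term.eval A (fun a => a) q.out

lemma gmap_mk (hAE : A.Models (idsOf (InMaltsev V W))) (s : Term S A.carrier) :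
    gmap V W A (Quotient.mk (semCong (InMaltsev V W) A.carrier A.nonempty).setoid s)
      = Term.eval A (fun a => a) s :=
  transfer hAE A.nonempty (rel_out_mk (semCong (InMaltsev V W) A.carrier A.nonempty) s) _

lemma gmap_hom (hAE : A.Models (idsOf (InMaltsev V W))) :
    IsHom (KF V W A.carrier A.nonempty) A (gmap V W A) := by
  intro ω a
  have h1 : (KF V W A.carrier A.nonempty).op ω a
      = Quotient.mk (semCong (InMaltsev V W) A.carrier A.nonempty).setoid
          (Term.app ω (fun i => (a i).out)) := rfl
  rw [h1, gmap_mk V W A hAE]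
  rfl

lemma gmap_surj (hAE : A.Models (idsOf (InMaltsev V W))) :
    Function.Surjective (gmap V W A) := by
  intro a
  exact ⟨Quotient.mk (semCong (InMaltsev V W) A.carrier A.nonempty).setoid (Term.var a),
    gmap_mk V W A hAE (Term.var a)⟩

end
end St16
namespace St16
variable {S : Signature}

section Hclo
variable {F A : Alg S} (g : F.carrier → A.carrier) (θ : Congruence F)

def stepR (x y : F.carrier) : Prop := θ.rel x y ∨ g x = g y

def JJ (x y : F.carrier) : Prop := Relation.ReflTransGen (stepR g θ) x y

variable {g} {θ}

lemma stepR_symm : Symmetric (stepR g θ) := by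
  intro x y h
  rcases h with h | h
  · exact Or.inl (θ.iseqv.symm h)
  · exact Or.inr h.symm

lemma JJ_symm {x y : F.carrier} (h : JJ g θ x y) : JJ g θ y x :=
  by haveI : Std.Symm (stepR g θ) := ⟨fun a b h' => stepR_symm h'⟩; exact Std.Symm.symm (r := Relation.ReflTransGen (stepR g θ)) _ _ h

lemma JJ_trans {x y z : F.carrier} (h1 : JJ g θ x y) (h2 : JJ g θ y z) : JJ g θ x z :=
  Relation.ReflTransGen.trans h1 h2

variable (hg : IsHom F A g)

include hg in
lemma stepR_single (ω : S.symbols) (x y : Fin (S.arity ω) → F.carrier) (i : Fin (S.arity ω))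
    (hi : stepR g θ (x i) (y i)) (hj : ∀ j, j ≠ i → x j = y j) :
    stepR g θ (F.op ω x) (F.op ω y) := by
  rcases hi with hi | hi
  · refine Or.inl (θ.compat ω x y (fun j => ?_))
    by_cases hji : j = i
    · subst hji; exact hi
    · rw [hj j hji]; exact θ.iseqv.refl _
  · refine Or.inr ?_
    rw [hg, hg]
    congr 1
    funext j
    by_cases hji : j = i
    · subst hji; exact hi
    · rw [hj j hji]

include hg in
lemma JJ_update (ω : S.symbols) (x : Fin (S.arity ω) → F.carrier) (i : Fin (S.arity ω))
    (c : F.carrier) (h : JJ g θ (x i) c) :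
    JJ g θ (F.op ω x) (F.op ω (Function.update x i c)) := by
  induction h with
  | refl => rw [Function.update_eq_self]; exact Relation.ReflTransGen.refl
  | @tail b c hab hbc ih =>
      refine Relation.ReflTransGen.tail ih ?_
      refine stepR_single hg ω (Function.update x i b) (Function.update x i c) i ?_ ?_
      · rw [Function.update_self, Function.update_self]; exact hbc
      · intro j hji
        rw [Function.update_of_ne hji, Function.update_of_ne hji]

include hg in
lemma JJ_compat (ω : S.symbols) (x y : Fin (S.arity ω) → F.carrier)
    (h : ∀ i, JJ g θ (x i) (y i)) : JJ g θ (F.op ω x) (F.op ω y) := by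
  have aux : ∀ (k : ℕ) (x : Fin (S.arity ω) → F.carrier),
      (∀ i, JJ g θ (x i) (y i)) → (∀ i : Fin (S.arity ω), k ≤ i.val → x i = y i) →
      JJ g θ (F.op ω x) (F.op ω y) := by
    intro k
    induction k with
    | zero =>
        intro x hx hagree
        have : x = y := funext fun i => hagree i (Nat.zero_le _)
        rw [this]
        exact Relation.ReflTransGen.refl
    | succ k ih =>
        intro x hx hagree
        by_cases hk : k < S.arity ω
        · set i : Fin (S.arity ω) := ⟨k, hk⟩ with hi
          have h1 : JJ g θ (F.op ω x) (F.op ω (Function.update x i (y i))) :=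
            JJ_update hg ω x i (y i) (hx i)
          have h2 : JJ g θ (F.op ω (Function.update x i (y i))) (F.op ω y) := by
            refine ih (Function.update x i (y i)) (fun j => ?_) (fun j hj => ?_)
            · by_cases hji : j = i
              · subst hji; rw [Function.update_self]; exact Relation.ReflTransGen.refl
              · rw [Function.update_of_ne hji]; exact hx j
            · by_cases hji : j = i
              · subst hji; rw [Function.update_self]
              · rw [Function.update_of_ne hji]
                refine hagree j ?_
                rcases Nat.lt_or_ge j.val (k+1) with hlt | hge
                · exfalso
                  have : j.val = k := Nat.le_antisymm (Nat.lt_succ_iff.1 hlt) hj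
                  exact hji (Fin.ext this)
                · exact hge
          exact JJ_trans h1 h2
        · refine ih x hx (fun i hik => ?_)
          exact absurd (lt_of_lt_of_le i.isLt (Nat.not_lt.1 hk)) (Nat.not_lt.2 hik)
  refine aux (S.arity ω) x h (fun i hi => absurd i.isLt (Nat.not_lt.2 hi))

variable (hsurj : Function.Surjective g)

noncomputable def thetaA (hg : IsHom F A g) (hsurj : Function.Surjective g) : Congruence A where
  rel a b := ∃ x y : F.carrier, g x = a ∧ g y = b ∧ JJ g θ x y
  iseqv := by
    refine ⟨fun a => ?_, ?_, ?_⟩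
    · obtain ⟨x, hx⟩ := hsurj a
      exact ⟨x, x, hx, hx, Relation.ReflTransGen.refl⟩
    · rintro a b ⟨x, y, h1, h2, h3⟩
      exact ⟨y, x, h2, h1, JJ_symm h3⟩
    · rintro a b c ⟨x, y, h1, h2, h3⟩ ⟨x', z, h1', h2', h3'⟩
      refine ⟨x, z, h1, h2', ?_⟩
      refine JJ_trans h3 (JJ_trans ?_ h3')
      exact Relation.ReflTransGen.single (Or.inr (h2.trans h1'.symm))
  compat := by
    intro ω a b h
    choose x y h1 h2 h3 using h
    refine ⟨F.op ω x, F.op ω y, ?_, ?_, JJ_compat hg ω x y h3⟩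
    · rw [hg]; exact congrArg _ (funext h1)
    · rw [hg]; exact congrArg _ (funext h2)

end Hclo
end St16
namespace St16
variable {S : Signature}

section Hclo2
variable {V W : Set (Ident S)}
variable {F A : Alg S} {g : F.carrier → A.carrier} {θ : Congruence F}
variable {p : Term S (Fin 3)}

lemma quotA_W (hg : IsHom F A g) (hsurj : Function.Surjective g) (hw : IsWit V W F θ) :
    (A.quot (thetaA (θ := θ) hg hsurj)).Models W := by
  set θA := thetaA (θ := θ) hg hsurj with hθA
  have hwd : ∀ a b : F.carrier, θ.rel a b →
      (Quotient.mk θA.setoid (g a)) = (Quotient.mk θA.setoid (g b)) := by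
    intro a b hab
    exact Quotient.sound ⟨a, b, rfl, rfl, Relation.ReflTransGen.single (Or.inl hab)⟩
  set φ : (F.quot θ).carrier → (A.quot θA).carrier :=
    Quotient.lift (fun x => Quotient.mk θA.setoid (g x)) hwd with hφ
  have hφmk : ∀ z : F.carrier, φ (Quotient.mk θ.setoid z) = Quotient.mk θA.setoid (g z) :=
    fun z => rfl
  have hφhom : IsHom (F.quot θ) (A.quot θA) φ := by
    intro ω q
    have h1 : (F.quot θ).op ω q
        = Quotient.mk θ.setoid (F.op ω (fun i => (q i).out)) := rfl
    rw [h1, hφmk]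
    show _ = Quotient.mk θA.setoid (A.op ω (fun i => (φ (q i)).out))
    refine Quotient.sound ?_
    have h2 : g (F.op ω (fun i => (q i).out)) = A.op ω (fun i => g ((q i).out)) := hg ω _
    rw [h2]
    refine θA.compat ω _ _ (fun i => ?_)
    have h3 : φ (q i) = Quotient.mk θA.setoid (g ((q i).out)) := by
      conv_lhs => rw [← Quotient.out_eq (q i)]
      rfl
    rw [h3]
    exact θA.iseqv.symm (rel_out_mk θA (g ((q i).out)))
  have hφsurj : Function.Surjective φ := by
    intro qa
    obtain ⟨x, hx⟩ := hsurj qa.out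
    refine ⟨Quotient.mk θ.setoid x, ?_⟩
    rw [hφmk, hx]
    exact Quotient.out_eq qa
  exact models_surj hφhom hφsurj hw.1

variable (hWidem : ∀ A : Alg S, A.Models W → ∀ a : A.carrier, A.IsIdem a)
variable (hM1 : ∀ C : Alg S, C.Models V → ∀ env : Fin 3 → C.carrier,
    env 1 = env 2 → Term.eval C env p = env 0)
variable (hM2 : ∀ C : Alg S, C.Models V → ∀ env : Fin 3 → C.carrier,
    env 0 = env 1 → Term.eval C env p = env 2)

include hWidem hM1 hM2 in
lemma pairMerge (hg : IsHom F A g) (hw : IsWit V W F θ) {x y : F.carrier} (h : JJ g θ x y) :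
    ∃ c c' : F.carrier, g c = g x ∧ g c' = g y ∧ θ.rel c c' := by
  induction h with
  | refl => exact ⟨x, x, rfl, rfl, θ.iseqv.refl x⟩
  | @tail b c hxb hbc ih =>
      obtain ⟨d, d', hd, hd', hdd'⟩ := ih
      rcases hbc with hθ | hκ
      · refine ⟨Term.eval F ![d, d', b] p, Term.eval F ![d', d', c] p, ?_, ?_, ?_⟩
        · have h1 : g (Term.eval F ![d, d', b] p) = g (Term.eval F ![d, d', d'] p) := by
            rw [← eval_hom hg, ← eval_hom hg]
            congr 1
            funext i
            fin_cases i <;> simp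
            exact hd'.symm
          rw [h1, pM1 hWidem hM1 hw (θ.iseqv.symm hdd')]
          exact hd
        · have h2 : g (Term.eval F ![d', d', c] p) = g (Term.eval F ![b, b, c] p) := by
            rw [← eval_hom hg, ← eval_hom hg]
            congr 1
            funext i
            fin_cases i <;> simp
            · exact hd'
            · exact hd'
          rw [h2, pM2 hWidem hM2 hw hθ]
        · have t1 : θ.rel (Term.eval F ![d, d', b] p) (Term.eval F ![d', d', b] p) := by
            refine eval_congr_rel θ (fun i => ?_) p
            fin_cases i
            · exact hdd'
            · exact θ.iseqv.refl _
            · exact θ.iseqv.refl _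
          have t2 : θ.rel (Term.eval F ![d', d', b] p) (Term.eval F ![d', d', c] p) := by
            refine eval_congr_rel θ (fun i => ?_) p
            fin_cases i
            · exact θ.iseqv.refl _
            · exact θ.iseqv.refl _
            · exact hθ
          exact θ.iseqv.trans t1 t2
      · exact ⟨d, d', hd, hd'.trans hκ, hdd'⟩

include hWidem hM1 hM2 in
lemma listMerge (hg : IsHom F A g) (hw : IsWit V W F θ) (z₀ : F.carrier) (l : List F.carrier)
    (hpair : ∀ x ∈ z₀ :: l, ∀ y ∈ z₀ :: l, JJ g θ x y) :
    ∃ d : F.carrier, ∀ x ∈ z₀ :: l, ∃ c, g c = g x ∧ θ.rel d c := by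
  induction l with
  | nil =>
      refine ⟨z₀, fun x hx => ?_⟩
      have : x = z₀ := by simpa using hx
      subst this
      exact ⟨x, rfl, θ.iseqv.refl x⟩
  | cons z l ih =>
      have hpair' : ∀ x ∈ z₀ :: l, ∀ y ∈ z₀ :: l, JJ g θ x y := by
        intro x hx y hy
        refine hpair x ?_ y ?_
        · rcases List.mem_cons.1 hx with h | h
          · exact h ▸ List.mem_cons_self
          · exact List.mem_cons_of_mem _ (List.mem_cons_of_mem _ h)
        · rcases List.mem_cons.1 hy with h | h
          · exact h ▸ List.mem_cons_self
          · exact List.mem_cons_of_mem _ (List.mem_cons_of_mem _ h)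
      obtain ⟨d, hd⟩ := ih hpair'
      obtain ⟨c₀, hc₀g, hc₀θ⟩ := hd z₀ (List.mem_cons_self)
      have hJdz : JJ g θ d z := by
        refine JJ_trans (Relation.ReflTransGen.single (Or.inl hc₀θ)) ?_
        refine JJ_trans (Relation.ReflTransGen.single (Or.inr hc₀g)) ?_
        exact hpair z₀ (List.mem_cons_self) z (List.mem_cons_of_mem _ (List.mem_cons_self))
      obtain ⟨c, c', hc, hc', hcc'⟩ := pairMerge hWidem hM1 hM2 hg hw hJdz
      refine ⟨Term.eval F ![c, c, d] p, fun x hx => ?_⟩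
      rcases List.mem_cons.1 hx with hxz₀ | hx'
      · -- x = z₀ : it is in z₀ :: l
        obtain ⟨cᵢ, hgi, hθi⟩ := hd x (hxz₀ ▸ List.mem_cons_self)
        refine ⟨Term.eval F ![c, c, cᵢ] p, ?_, ?_⟩
        · have h3 : g (Term.eval F ![c, c, cᵢ] p) = g (Term.eval F ![d, d, cᵢ] p) := by
            rw [← eval_hom hg, ← eval_hom hg]
            congr 1
            funext i
            fin_cases i <;> simp
            · exact hc
            · exact hc
          rw [h3, pM2 hWidem hM2 hw hθi]
          exact hgi
        · refine eval_congr_rel θ (fun i => ?_) p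
          fin_cases i
          · simpa using θ.iseqv.refl c
          · simpa using θ.iseqv.refl c
          · simpa using hθi
      · rcases List.mem_cons.1 hx' with hxz | hxl
        · -- x = z
          subst hxz
          refine ⟨Term.eval F ![c', c, d] p, ?_, ?_⟩
          · have h4 : g (Term.eval F ![c', c, d] p) = g (Term.eval F ![c', c, c] p) := by
              rw [← eval_hom hg, ← eval_hom hg]
              congr 1
              funext i
              fin_cases i <;> simp
              exact hc.symm
            rw [h4, pM1 hWidem hM1 hw hcc']
            exact hc'
          · refine eval_congr_rel θ (fun i => ?_) p
            fin_cases i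
            · simpa using hcc'
            · simpa using θ.iseqv.refl c
            · simpa using θ.iseqv.refl d
        · obtain ⟨cᵢ, hgi, hθi⟩ := hd x (List.mem_cons_of_mem _ hxl)
          refine ⟨Term.eval F ![c, c, cᵢ] p, ?_, ?_⟩
          · have h3 : g (Term.eval F ![c, c, cᵢ] p) = g (Term.eval F ![d, d, cᵢ] p) := by
              rw [← eval_hom hg, ← eval_hom hg]
              congr 1
              funext i
              fin_cases i <;> simp
              · exact hc
              · exact hc
            rw [h3, pM2 hWidem hM2 hw hθi]
            exact hgi
          · refine eval_congr_rel θ (fun i => ?_) p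
            fin_cases i
            · simpa using θ.iseqv.refl c
            · simpa using θ.iseqv.refl c
            · simpa using hθi

end Hclo2
end St16
namespace St16
variable {S : Signature}

section Hclo3
variable {V W : Set (Ident S)}
variable {F A : Alg S} {g : F.carrier → A.carrier} {θ : Congruence F}
variable {p : Term S (Fin 3)}
variable (hWidem : ∀ A : Alg S, A.Models W → ∀ a : A.carrier, A.IsIdem a)
variable (hM1 : ∀ C : Alg S, C.Models V → ∀ env : Fin 3 → C.carrier,
    env 1 = env 2 → Term.eval C env p = env 0)
variable (hM2 : ∀ C : Alg S, C.Models V → ∀ env : Fin 3 → C.carrier,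
    env 0 = env 1 → Term.eval C env p = env 2)

include hWidem hM1 hM2 in
lemma classesA_V (hg : IsHom F A g) (hsurj : Function.Surjective g) (hw : IsWit V W F θ) :
    ∀ a₀ : A.carrier,
    ∀ hZ : A.IsSubuniverse {b | (thetaA (θ := θ) hg hsurj).rel a₀ b},
      (A.subAlg {b | (thetaA (θ := θ) hg hsurj).rel a₀ b} hZ
        ⟨a₀, (thetaA (θ := θ) hg hsurj).iseqv.refl a₀⟩).Models V := by
  classical
  intro a₀ hZ e he env
  set θA := thetaA (θ := θ) hg hsurj with hθA
  refine Subtype.ext ?_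
  rw [← eval_hom (subAlg_val_hom _ hZ _) env e.1, ← eval_hom (subAlg_val_hom _ hZ _) env e.2]
  set q : ℕ → A.carrier := fun n => (env n).val with hq
  have hqrel : ∀ n, θA.rel a₀ (q n) := fun n => (env n).2
  choose xs ys h1 h2 h3 using hqrel
  obtain ⟨x₀, hx₀⟩ := hsurj a₀
  have hJ : ∀ n, JJ g θ x₀ (ys n) := fun n =>
    JJ_trans (Relation.ReflTransGen.single (Or.inr (hx₀.trans (h1 n).symm))) (h3 n)
  set L : List ℕ := tvars e.1 ++ tvars e.2 with hL
  set l : List F.carrier := L.map ys with hl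
  have hmem : ∀ u ∈ x₀ :: l, JJ g θ x₀ u := by
    intro u hu
    rcases List.mem_cons.1 hu with h | h
    · subst h; exact Relation.ReflTransGen.refl
    · obtain ⟨n, hn, rfl⟩ := List.mem_map.1 h
      exact hJ n
  have hpair : ∀ u ∈ x₀ :: l, ∀ v ∈ x₀ :: l, JJ g θ u v :=
    fun u hu v hv => JJ_trans (JJ_symm (hmem u hu)) (hmem v hv)
  obtain ⟨d, hd⟩ := listMerge hWidem hM1 hM2 hg hw x₀ l hpair
  have hmem2 : ∀ n, n ∈ L → ys n ∈ x₀ :: l :=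
    fun n h => List.mem_cons_of_mem _ (List.mem_map.2 ⟨n, h, rfl⟩)
  set cf : ℕ → F.carrier := fun n =>
    if h : n ∈ L then (hd (ys n) (hmem2 n h)).choose else d with hcf
  have hcrel : ∀ n, θ.rel d (cf n) := by
    intro n
    by_cases h : n ∈ L
    · simp only [hcf, dif_pos h]
      exact (hd (ys n) (hmem2 n h)).choose_spec.2
    · simp only [hcf, dif_neg h]
      exact θ.iseqv.refl d
  have hgc : ∀ n ∈ L, g (cf n) = q n := by
    intro n h
    simp only [hcf, dif_pos h]
    exact ((hd (ys n) (hmem2 n h)).choose_spec.1).trans (h2 n)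
  have hA1 : Term.eval A q e.1 = Term.eval A (fun n => g (cf n)) e.1 :=
    eval_congr_vars e.1 (fun n hn => (hgc n (List.mem_append_left _ hn)).symm)
  have hA2 : Term.eval A q e.2 = Term.eval A (fun n => g (cf n)) e.2 :=
    eval_congr_vars e.2 (fun n hn => (hgc n (List.mem_append_right _ hn)).symm)
  rw [hA1, hA2, eval_hom hg, eval_hom hg]
  have hsubZ := class_subuniv hWidem hw.1 d
  have hV := hw.2 d hsubZ
  set env' : ℕ → ((F.subAlg {b | θ.rel d b} hsubZ ⟨d, θ.iseqv.refl d⟩).carrier) :=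
    fun n => ⟨cf n, hcrel n⟩ with henv'
  have hfin : Term.eval F cf e.1 = Term.eval F cf e.2 := by
    have hcfval : cf = fun n => (env' n).val := rfl
    rw [hcfval]
    exact (eval_hom (subAlg_val_hom _ hsubZ _) env' e.1).trans
      ((congrArg Subtype.val (hV e he env')).trans (eval_hom (subAlg_val_hom _ hsubZ _) env' e.2).symm)
  rw [hfin]

include hWidem hM1 hM2 in
lemma inMaltsev_of_surj (g : F.carrier → A.carrier) (hg : IsHom F A g)
    (hsurj : Function.Surjective g) (hFK : InMaltsev V W F) : InMaltsev V W A := by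
  obtain ⟨θ, hw⟩ := hFK
  exact ⟨thetaA (θ := θ) hg hsurj, quotA_W hg hsurj hw,
    classesA_V hWidem hM1 hM2 hg hsurj hw⟩

end Hclo3
end St16


/-- Let `V` be a congruence permutable variety and `W` an
idempotent variety of the same type without nullary operation symbols. If
`V ∩ W` is the trivial variety, then the Mal'tsev product `V ∘ W` is a
variety. -/
theorem stmt_16 (S : Signature) (h0 : ∀ ω : S.symbols, 0 < S.arity ω)
    (V W : Set (Ident S))
    (hVperm : ∀ A : Alg S, A.Models V →
      ∀ α β : Congruence A, RelComp α.rel β.rel = RelComp β.rel α.rel)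
    (hWidem : ∀ A : Alg S, A.Models W → ∀ a : A.carrier, A.IsIdem a)
    (htriv : ∀ A : Alg S, A.Models V → A.Models W → Subsingleton A.carrier) :
    IsVarietyClass (InMaltsev V W) := by
  classical
  obtain ⟨p, hM1, hM2⟩ := St16.maltsev_term V hVperm
  refine ⟨St16.idsOf (InMaltsev V W), fun A => ⟨?_, ?_⟩⟩
  · intro hA e he env
    exact he A hA env
  · intro hAE
    have hFK : InMaltsev V W (St16.KF V W A.carrier A.nonempty) :=
      ⟨St16.KTheta V W A.carrier A.nonempty, St16.KF_quot_W V W hWidem,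
        St16.KF_classes_V V W hWidem⟩
    exact St16.inMaltsev_of_surj hWidem hM1 hM2 (St16.gmap V W A)
      (St16.gmap_hom V W A hAE) (St16.gmap_surj V W A hAE) hFK
end
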